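/- Let r be a natural number, b₁, …, b_r a basis of the ℚ-vector space ℚ^r, and C = {Σ_i tᵢ·bᵢ : tᵢ ∈ ℚ, tᵢ ≥ 0} the full polyhedral cone spanned by this basis. Let p ∈ ℤ^r. Then: (1) the intersection C ∩ (p + C) is a translate of C, i.e. there exists q ∈ ℚ^r with C ∩ (p + C) = q + C; (2) there exists x ∈ ℤ^r with x ∈ C ∩ (p + C); and (3) for any such x, setting v = x − p, one has p + n·v ∈ ℤ^r ∩ C ∩ (p + C) for every integer n ≥ 1. -/

import Mathlib

/-- For a full polyhedral cone `C ⊆ ℚ^r` spanned by a `ℚ`-basis and an integer vector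
`p`: (1) `C ∩ (p + C)` is a translate of `C`; (2) there is an integer vector in
`C ∩ (p + C)`; (3) for any such integer vector `x`, setting `v = x − p`, the point
`p + n·v` is an integer vector lying in `C ∩ (p + C)` for every integer `n ≥ 1`. -/
theorem cone_translate_lemma
    (r : ℕ) (b : Module.Basis (Fin r) ℚ (Fin r → ℚ))
    (C : Set (Fin r → ℚ))
    (hC : C = {x | ∃ t : Fin r → ℚ, (∀ i, 0 ≤ t i) ∧ x = ∑ i, t i • b i})
    (p : Fin r → ℤ) :
    (∃ q : Fin r → ℚ, C ∩ ((fun c => (fun i => (p i : ℚ)) + c) '' C) =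
        (fun c => q + c) '' C) ∧
    (∃ x : Fin r → ℤ, (fun i => (x i : ℚ)) ∈
        C ∩ ((fun c => (fun i => (p i : ℚ)) + c) '' C)) ∧
    (∀ x : Fin r → ℤ, (fun i => (x i : ℚ)) ∈
        C ∩ ((fun c => (fun i => (p i : ℚ)) + c) '' C) →
      ∀ n : ℤ, 1 ≤ n →
        (fun i => ((p i + n * (x i - p i) : ℤ) : ℚ)) ∈
          C ∩ ((fun c => (fun i => (p i : ℚ)) + c) '' C)) := by
  have hmem : ∀ y : Fin r → ℚ, y ∈ C ↔ ∀ i, 0 ≤ b.repr y i := by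
    intro y
    rw [hC]
    constructor
    · rintro ⟨t, ht, rfl⟩ i
      rw [b.repr_sum_self]
      exact ht i
    · intro h
      exact ⟨fun i => b.repr y i, h, (b.sum_repr y).symm⟩
  have himg : ∀ q y : Fin r → ℚ, y ∈ (fun c => q + c) '' C ↔ y - q ∈ C := by
    intro q y
    constructor
    · rintro ⟨c, hc, rfl⟩
      simpa using hc
    · intro h
      exact ⟨y - q, h, by simp⟩
  set P : Fin r → ℚ := fun i => (p i : ℚ) with hP
  set qv : Fin r → ℚ := ∑ i, (max (b.repr P i) 0) • b i with hqv
  have hq : ∀ i, b.repr qv i = max (b.repr P i) 0 := by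
    intro i; rw [hqv, b.repr_sum_self]
  have hset : C ∩ ((fun c => P + c) '' C) = (fun c => qv + c) '' C := by
    ext y
    rw [Set.mem_inter_iff, himg, himg, hmem, hmem, hmem]
    constructor
    · intro ⟨h1, h2⟩ i
      have := h1 i
      have := h2 i
      rw [map_sub] at *
      simp only [Finsupp.sub_apply, hq] at *
      rcases le_total (b.repr P i) 0 with h | h <;>
        simp [max_eq_left, max_eq_right, h] <;> linarith
    · intro h
      have h' : ∀ i, max (b.repr P i) 0 ≤ b.repr y i := by
        intro i
        have := h i
        rw [map_sub, Finsupp.sub_apply, hq] at this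
        linarith
      refine ⟨fun i => le_trans (le_max_right _ _) (h' i), fun i => ?_⟩
      rw [map_sub, Finsupp.sub_apply]
      have := h' i
      have := le_max_left (b.repr P i) (0:ℚ)
      linarith
  -- common denominator
  set N : ℕ := ∏ i, (qv i).den with hNdef
  have hN1 : 1 ≤ N := Nat.one_le_iff_ne_zero.2 (Finset.prod_ne_zero_iff.2 fun i _ => (qv i).den_nz)
  have hxint : ∀ i, ∃ z : ℤ, (z : ℚ) = (N : ℚ) * qv i := by
    intro i
    obtain ⟨k, hk⟩ : (qv i).den ∣ N := Finset.dvd_prod_of_mem _ (Finset.mem_univ i)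
    refine ⟨k * (qv i).num, ?_⟩
    have hden : ((qv i).den : ℚ) ≠ 0 := by exact_mod_cast (qv i).den_nz
    rw [hk]
    push_cast
    rw [mul_comm ((qv i).den : ℚ) (k : ℚ), mul_assoc, Rat.den_mul_eq_num, mul_comm]
  choose xz hxz using hxint
  have hqnn : ∀ i, 0 ≤ b.repr qv i := by
    intro i; rw [hq]; exact le_max_right _ _
  have hqgep : ∀ i, b.repr P i ≤ b.repr qv i := by
    intro i; rw [hq]; exact le_max_left _ _
  have hxeq : (fun i => (xz i : ℚ)) = (N : ℚ) • qv := by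
    funext i; simp [hxz i]
  have hxmem : (fun i => (xz i : ℚ)) ∈ C ∩ ((fun c => P + c) '' C) := by
    rw [Set.mem_inter_iff, himg, hmem, hmem, hxeq]
    have hN1' : (1 : ℚ) ≤ N := by exact_mod_cast hN1
    constructor <;> intro i <;>
      simp only [map_smul, map_sub, Finsupp.smul_apply, Finsupp.sub_apply, smul_eq_mul] <;>
      nlinarith [hqnn i, hqgep i]
  refine ⟨⟨qv, hset⟩, ⟨xz, hxmem⟩, ?_⟩
  intro x hx n hn
  rw [Set.mem_inter_iff, himg, hmem, hmem] at hx ⊢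
  obtain ⟨hx1, hx2⟩ := hx
  set X : Fin r → ℚ := fun i => (x i : ℚ) with hX
  have hyeq : (fun i => ((p i + n * (x i - p i) : ℤ) : ℚ)) = P + (n : ℚ) • (X - P) := by
    funext i
    simp only [Pi.add_apply, Pi.smul_apply, Pi.sub_apply, smul_eq_mul, hX, hP]
    push_cast
    ring
  have hn' : (1 : ℚ) ≤ (n : ℚ) := by exact_mod_cast hn
  rw [hyeq]
  have hx2' : ∀ i, 0 ≤ b.repr X i - b.repr P i := by
    intro i
    have := hx2 i
    rwa [map_sub, Finsupp.sub_apply] at this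
  constructor <;> intro i <;>
    simp only [map_add, map_smul, map_sub, Finsupp.add_apply, Finsupp.smul_apply,
      Finsupp.sub_apply, smul_eq_mul, add_sub_cancel_left] <;>
    nlinarith [hx1 i, hx2' i]
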